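/- (Bass–Papp) A ring A is left noetherian if and only if every direct sum of injective left A-modules is injective. -/

import Mathlib

universe u

open DirectSum

theorem BassPapp.forward {A : Type u} [Ring A] [IsNoetherianRing A]
    (J : Type u) (I : J → Type u) [∀ α, AddCommGroup (I α)] [∀ α, Module A (I α)]
    (hI : ∀ α, Module.Injective A (I α)) : Module.Injective A (⨁ α, I α) := by
  classical
  apply Module.Baer.injective
  intro P g
  obtain ⟨s, hs⟩ := IsNoetherian.noetherian P
  have hBaer : ∀ α, Module.Baer A (I α) := fun α => Module.Baer.of_injective (hI α)
  set S : Finset J :=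
    s.attach.biUnion (fun a => (g ⟨a.1, hs ▸ Submodule.subset_span a.2⟩).support) with hS
  have hsupp : ∀ (x : A) (hx : x ∈ P), (g ⟨x, hx⟩).support ⊆ S := by
    intro x hx
    rw [← hs] at hx
    induction hx using Submodule.span_induction with
    | mem y hy =>
        intro j hj
        exact Finset.mem_biUnion.2 ⟨⟨y, hy⟩, s.mem_attach _, hj⟩
    | zero =>
        have : (⟨(0:A), by simp⟩ : P) = 0 := rfl
        rw [this, map_zero]; simp
    | add y z hy hz ihy ihz =>
        have : (⟨y + z, by rw [← hs]; exact add_mem hy hz⟩ : P)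
            = ⟨y, hs ▸ hy⟩ + ⟨z, hs ▸ hz⟩ := rfl
        rw [this, map_add]
        exact (DFinsupp.support_add).trans (Finset.union_subset (ihy _) (ihz _))
    | smul a y hy ihy =>
        have : (⟨a • y, by rw [← hs]; exact Submodule.smul_mem _ _ hy⟩ : P)
            = a • ⟨y, hs ▸ hy⟩ := rfl
        rw [this, map_smul]
        exact (DFinsupp.support_smul _ _).trans (ihy _)
  choose h hh using fun α => hBaer α P ((DirectSum.component A J I α).comp g)
  refine ⟨∑ α ∈ S, (DirectSum.lof A J I α).comp (h α), fun x hx => ?_⟩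
  have key : g ⟨x, hx⟩ = ∑ α ∈ S, DirectSum.lof A J I α ((g ⟨x, hx⟩) α) := by
    conv_lhs => rw [← DirectSum.sum_support_of (g ⟨x, hx⟩)]
    exact Finset.sum_subset (hsupp x hx) (by intro j _ hj; simp [DFinsupp.notMem_support_iff.1 hj])
  rw [LinearMap.sum_apply, key]
  refine Finset.sum_congr rfl fun α _ => ?_
  rw [LinearMap.comp_apply, hh α x hx]
  rfl


theorem BassPapp.backward {A : Type u} [Ring A]
    (H : ∀ (J : Type u) (I : J → Type u)
        [∀ α, AddCommGroup (I α)] [∀ α, Module A (I α)],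
        (∀ α, Module.Injective A (I α)) → Module.Injective A (⨁ α, I α)) :
    IsNoetherianRing A := by
  classical
  rw [isNoetherianRing_iff, ← monotone_stabilizes_iff_noetherian]
  by_contra hcon
  push_neg at hcon
  obtain ⟨f, hf⟩ := hcon
  -- injective modules containing the quotients
  set E : ℕ → ModuleCat.{u} A :=
    fun n => CategoryTheory.Injective.under (ModuleCat.of A (A ⧸ f n)) with hE
  have hEinj : ∀ n, Module.Injective A (E n) := by
    intro n
    have : CategoryTheory.Injective (ModuleCat.of A (E n)) :=
      CategoryTheory.Injective.injective_under (ModuleCat.of A (A ⧸ f n))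
    exact Module.injective_module_of_injective_object A (E n)
  set e : ∀ n, (A ⧸ f n) →ₗ[A] E n :=
    fun n => (CategoryTheory.Injective.ι (ModuleCat.of A (A ⧸ f n))).hom with he
  have heinj : ∀ n, Function.Injective (e n) := fun n =>
    (ModuleCat.mono_iff_injective (CategoryTheory.Injective.ι (ModuleCat.of A (A ⧸ f n)))).mp inferInstance
  set J : Type u := ULift.{u} ℕ with hJ
  set Ifam : J → Type u := fun j => E j.down with hIfam
  have hinj : Module.Injective A (⨁ j, Ifam j) := H J Ifam (fun j => hEinj j.down)
  set Ir : Ideal A := ⨆ n, f n with hIr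
  have hmem : ∀ x ∈ Ir, ∃ N, x ∈ f N := by
    intro x hx
    rwa [hIr, Submodule.mem_iSup_of_directed _ f.monotone.directed_le] at hx
  choose N hN using fun (x : Ir) => hmem x.1 x.2
  -- the key map
  set val : Ir → ⨁ j, Ifam j := fun x =>
    DirectSum.mk Ifam ((Finset.range (N x)).image ULift.up)
      (fun j => e j.1.down (Submodule.Quotient.mk x.1)) with hval
  have hvalkey : ∀ (x : Ir) (j : J),
      (val x) j = e j.down (Submodule.Quotient.mk x.1) := by
    intro x j
    by_cases hj : j ∈ (Finset.range (N x)).image ULift.up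
    · rw [hval]; exact DirectSum.mk_apply_of_mem hj
    · have h1 : (val x) j = 0 := by rw [hval]; exact DirectSum.mk_apply_of_notMem hj
      have h2 : N x ≤ j.down := by
        by_contra hlt
        exact hj (Finset.mem_image.2 ⟨j.down, Finset.mem_range.2 (not_le.1 hlt), rfl⟩)
      have h3 : x.1 ∈ f j.down := f.monotone h2 (hN x)
      rw [h1, (Submodule.Quotient.mk_eq_zero _).2 h3, map_zero]
  set φ : Ir →ₗ[A] ⨁ j, Ifam j :=
    { toFun := val
      map_add' := by
        intro x y
        refine DFinsupp.ext fun j => ?_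
        rw [DirectSum.add_apply, hvalkey, hvalkey, hvalkey]
        simp [Submodule.Quotient.mk_add]
      map_smul' := by
        intro a x
        refine DFinsupp.ext fun j => ?_
        rw [DFinsupp.smul_apply, hvalkey, hvalkey]
        simp only [RingHom.id_apply]
        rw [show ((a • x : Ir) : A) = a • (x : A) from rfl, Submodule.Quotient.mk_smul,
          map_smul] } with hφ
  obtain ⟨g, hg⟩ := hinj.out Ir.subtype Ir.injective_subtype φ
  set z : ⨁ j, Ifam j := g 1 with hz
  set N₀ : ℕ := (z.support.image (fun j => j.down)).sup id + 1 with hN₀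
  have hzN₀ : z (ULift.up N₀) = 0 := by
    by_contra hne
    have : (ULift.up N₀ : J) ∈ z.support := DFinsupp.mem_support_iff.2 hne
    have : N₀ ∈ z.support.image (fun j => j.down) := Finset.mem_image.2 ⟨_, this, rfl⟩
    have h4 := Finset.le_sup (f := id) this
    rw [hN₀] at h4
    simp only [id] at h4
    omega
  obtain ⟨m, hm, hne⟩ := hf N₀
  obtain ⟨x, hxm, hxN₀⟩ := SetLike.exists_of_lt (lt_of_le_of_ne (f.monotone hm) hne)
  have hxI : x ∈ Ir := le_iSup f m hxm
  have key : φ ⟨x, hxI⟩ = x • z := by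
    rw [← hg ⟨x, hxI⟩]
    have : Ir.subtype ⟨x, hxI⟩ = x • (1 : A) := by simp
    rw [this, map_smul, ← hz]
  have comp := congrArg (fun v => v (ULift.up N₀)) key
  simp only at comp
  have lhs : (φ ⟨x, hxI⟩) (ULift.up N₀) = e N₀ (Submodule.Quotient.mk x) :=
    hvalkey ⟨x, hxI⟩ (ULift.up N₀)
  have rhs : (x • z) (ULift.up N₀) = 0 := by
    rw [DFinsupp.smul_apply, hzN₀, smul_zero]
  rw [lhs, rhs] at comp
  have : e N₀ (Submodule.Quotient.mk x) = 0 := comp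
  exact hxN₀ ((Submodule.Quotient.mk_eq_zero _).1
    (heinj N₀ (by rw [this, map_zero])))

theorem isNoetherianRing_iff_directSum_injective (A : Type u) [Ring A] :
    IsNoetherianRing A ↔
      ∀ (J : Type u) (I : J → Type u)
        [∀ α, AddCommGroup (I α)] [∀ α, Module A (I α)],
        (∀ α, Module.Injective A (I α)) → Module.Injective A (⨁ α, I α) := by
  constructor
  · intro hA J I _ _ hI
    exact BassPapp.forward J I hI
  · intro H
    exact BassPapp.backward H
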